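/- Let S be a decision rule system with n(S) > 0 and let S′ = R_SR(S). Then max{d(S′), β_ESR(S′)} ≤ h_ESR(S) ≤ d(S′)·β_ESR⁺(S′). -/

import Mathlib

/- Common formal framework for decision rule systems and decision trees /
   acyclic decision graphs, following Durdymyradov & Moshkov. -/

attribute [local instance] Classical.propDecidable

noncomputable section

namespace DRS

/-- A decision rule `(a_{i₁}=δ₁) ∧ ⋯ ∧ (a_{i_m}=δ_m) → σ`:
`K` is the finite set of equations (attribute index, value), `rhs` is σ. -/
structure Rule where
  K : Finset (ℕ × ℕ)
  rhs : ℕ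

/-- Well-formedness of a rule: the attributes on its left-hand side are pairwise different. -/
def Rule.WF (r : Rule) : Prop := ∀ p ∈ r.K, ∀ q ∈ r.K, p.1 = q.1 → p = q

/-- A(r): the set of attributes of a rule. -/
def Rule.attrs (r : Rule) : Finset ℕ := r.K.image Prod.fst

/-- The length m of a rule. -/
def Rule.len (r : Rule) : ℕ := r.K.card

/-- A(S) -/
def attrs (S : Finset Rule) : Finset ℕ := S.biUnion Rule.attrs

/-- n(S) -/
def nPar (S : Finset Rule) : ℕ := (attrs S).card

/-- d(S): the maximum length of a rule of S. -/
def dPar (S : Finset Rule) : ℕ := S.sup Rule.len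

/-- D(S): the set of right-hand sides. -/
def rhsSet (S : Finset Rule) : Finset ℕ := S.image Rule.rhs

/-- V_S(a_i) -/
def VS (S : Finset Rule) (i : ℕ) : Finset ℕ :=
  ((S.biUnion Rule.K).filter fun p => p.1 = i).image Prod.snd

/-- k(S) -/
def kPar (S : Finset Rule) : ℕ := (attrs S).sup fun i => (VS S i).card

/-- Attribute values in trees are `Option ℕ`; `none` plays the role of the special value `*`.
`allowed S false i` is (the lift of) `V_S(a_i)`, and `allowed S true i` is `EV_S(a_i)`. -/
def allowed (S : Finset Rule) (ext : Bool) (i : ℕ) : Finset (Option ℕ) :=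
  (VS S i).image some ∪ (if ext then {none} else ∅)

/-- Consistency of an equation system over ω ∪ {*}. -/
def ConsistentE (E : Finset (ℕ × Option ℕ)) : Prop :=
  ∀ p ∈ E, ∀ q ∈ E, p.1 = q.1 → p.2 = q.2

/-- Lift the left-hand side of a rule to an equation system over ω ∪ {*}. -/
def liftK (K : Finset (ℕ × ℕ)) : Finset (ℕ × Option ℕ) :=
  K.image fun p => (p.1, some p.2)

/-- A finite directed labeled graph: the nodes are `0, …, n-1`, with a distinguished root,
each node carries either an attribute (working node) or a set of rules (terminal node),
and edges are labeled with elements of ω ∪ {*}. -/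
structure DGraph where
  n : ℕ
  root : ℕ
  label : ℕ → ℕ ⊕ Finset Rule
  edges : Finset (ℕ × Option ℕ × ℕ)

namespace DGraph

def step (G : DGraph) (u v : ℕ) : Prop := ∃ l, (u, l, v) ∈ G.edges

/-- The graph has no directed cycles. -/
def Acyclic (G : DGraph) : Prop := ∀ v, ¬ Relation.TransGen G.step v v

/-- A node is terminal if no edge leaves it. -/
def IsTerminal (G : DGraph) (v : ℕ) : Prop := ∀ e ∈ G.edges, e.1 ≠ v

/-- The set of rules attached to a (terminal) node. -/
def termSet (G : DGraph) (v : ℕ) : Finset Rule :=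
  Sum.elim (fun _ => (∅ : Finset Rule)) id (G.label v)

/-- `G` is an acyclic decision graph over the rule system `S`;
`ext = false` : branching over `V_S` (o-type), `ext = true` : branching over `EV_S` (e-type).
Terminal nodes are labeled with subsets of S; each working node is labeled with an
attribute `a` of `A(S)` and has exactly one leaving edge for every element of
`V_S(a)` (resp. `EV_S(a)`), the edges leaving it being labeled with these
pairwise different elements. -/
def IsDG (G : DGraph) (S : Finset Rule) (ext : Bool) : Prop :=
  G.root < G.n ∧
  (∀ e ∈ G.edges, e.1 < G.n ∧ e.2.2 < G.n) ∧
  G.Acyclic ∧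
  (∀ v < G.n,
    if G.IsTerminal v then
      ∃ Z : Finset Rule, G.label v = Sum.inr Z ∧ Z ⊆ S
    else
      ∃ a : ℕ, G.label v = Sum.inl a ∧ a ∈ attrs S ∧
        (∀ l : Option ℕ, (∃ w, (v, l, w) ∈ G.edges) ↔ l ∈ allowed S ext a) ∧
        (∀ l w w', (v, l, w) ∈ G.edges → (v, l, w') ∈ G.edges → w = w'))

/-- `G` is a finite directed tree with root: the root has no entering edge and every
other node has exactly one entering edge (together with acyclicity this makes the
graph a rooted tree). -/
def IsTree (G : DGraph) : Prop :=
  (∀ e ∈ G.edges, e.2.2 ≠ G.root) ∧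
  (∀ v < G.n, v ≠ G.root → ∃! e, e ∈ G.edges ∧ e.2.2 = v)

/-- `chainFrom G v p t`: the list `p` of (node, leaving-edge-label) pairs forms a
directed path in `G` starting at `v` and ending at `t`. -/
def chainFrom (G : DGraph) : ℕ → List (ℕ × Option ℕ) → ℕ → Prop
  | v, [], t => v = t
  | v, e :: rest, t => e.1 = v ∧ ∃ w, (v, e.2, w) ∈ G.edges ∧ chainFrom G w rest t

/-- A complete path: from the root to a terminal node; it is recorded by the list of
its working nodes with the labels of the edges taken, together with its terminal node. -/
def IsCompletePath (G : DGraph) (p : List (ℕ × Option ℕ)) (t : ℕ) : Prop :=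
  G.chainFrom G.root p t ∧ G.IsTerminal t ∧ t < G.n

/-- K(ξ): the equation system associated with a complete path. -/
def pathEqs (G : DGraph) (p : List (ℕ × Option ℕ)) : Finset (ℕ × Option ℕ) :=
  (p.filterMap fun e =>
    Sum.elim (fun a => some (a, e.2)) (fun _ => none) (G.label e.1)).toFinset

/-- L(Γ): the number of nodes. -/
def size (G : DGraph) : ℕ := G.n

/-- T(Γ): the number of terminal nodes labeled with pairwise different sets of rules. -/
def tCount (G : DGraph) : ℕ :=
  (((Finset.range G.n).filter fun v => G.IsTerminal v).image fun v => G.termSet v).card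

/-- h(Γ): the maximum number of working nodes on a complete path. -/
def depth (G : DGraph) : ℕ :=
  sSup {m | ∃ p t, G.IsCompletePath p t ∧ p.length = m}

/-- Path conditions for (the solutions of) the problems All Rules / EAll Rules. -/
def SolvesAR (G : DGraph) (S : Finset Rule) : Prop :=
  ∀ p t, G.IsCompletePath p t → ConsistentE (G.pathEqs p) →
    (∀ r ∈ G.termSet t, liftK r.K ⊆ G.pathEqs p) ∧
    (∀ r ∈ S, r ∉ G.termSet t → ¬ ConsistentE (liftK r.K ∪ G.pathEqs p))

/-- Path conditions for the problems All Decisions / EAll Decisions. -/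
def SolvesAD (G : DGraph) (S : Finset Rule) : Prop :=
  ∀ p t, G.IsCompletePath p t → ConsistentE (G.pathEqs p) →
    (∀ r ∈ G.termSet t, liftK r.K ⊆ G.pathEqs p) ∧
    (∀ r ∈ S, r ∉ G.termSet t → r.rhs ∉ (G.termSet t).image Rule.rhs →
      ¬ ConsistentE (liftK r.K ∪ G.pathEqs p))

/-- Path conditions for the problems Some Rules / ESome Rules. -/
def SolvesSR (G : DGraph) (S : Finset Rule) : Prop :=
  ∀ p t, G.IsCompletePath p t → ConsistentE (G.pathEqs p) →
    (∀ r ∈ G.termSet t, liftK r.K ⊆ G.pathEqs p) ∧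
    (G.termSet t = ∅ → ∀ r ∈ S, ¬ ConsistentE (liftK r.K ∪ G.pathEqs p))

end DGraph

/-- Γ is a decision tree over S solving AR(S) (an o-tree). -/
def TreeSolvesAR (S : Finset Rule) (G : DGraph) : Prop :=
  G.IsDG S false ∧ G.IsTree ∧ G.SolvesAR S
/-- Γ is a decision tree over S solving EAR(S) (an e-tree). -/
def TreeSolvesEAR (S : Finset Rule) (G : DGraph) : Prop :=
  G.IsDG S true ∧ G.IsTree ∧ G.SolvesAR S
/-- Γ is a decision tree over S solving AD(S) (an o-tree). -/
def TreeSolvesAD (S : Finset Rule) (G : DGraph) : Prop :=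
  G.IsDG S false ∧ G.IsTree ∧ G.SolvesAD S
/-- Γ is a decision tree over S solving EAD(S) (an e-tree). -/
def TreeSolvesEAD (S : Finset Rule) (G : DGraph) : Prop :=
  G.IsDG S true ∧ G.IsTree ∧ G.SolvesAD S
/-- Γ is a decision tree over S solving SR(S) (an o-tree). -/
def TreeSolvesSR (S : Finset Rule) (G : DGraph) : Prop :=
  G.IsDG S false ∧ G.IsTree ∧ G.SolvesSR S
/-- Γ is a decision tree over S solving ESR(S) (an e-tree). -/
def TreeSolvesESR (S : Finset Rule) (G : DGraph) : Prop :=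
  G.IsDG S true ∧ G.IsTree ∧ G.SolvesSR S

/-- L_AR(S): minimum number of nodes of a decision tree over S solving AR(S). -/
def L_AR (S : Finset Rule) : ℕ := sInf {m | ∃ G : DGraph, TreeSolvesAR S G ∧ G.size = m}
def L_EAR (S : Finset Rule) : ℕ := sInf {m | ∃ G : DGraph, TreeSolvesEAR S G ∧ G.size = m}
def L_AD (S : Finset Rule) : ℕ := sInf {m | ∃ G : DGraph, TreeSolvesAD S G ∧ G.size = m}
def L_EAD (S : Finset Rule) : ℕ := sInf {m | ∃ G : DGraph, TreeSolvesEAD S G ∧ G.size = m}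
def L_SR (S : Finset Rule) : ℕ := sInf {m | ∃ G : DGraph, TreeSolvesSR S G ∧ G.size = m}
def L_ESR (S : Finset Rule) : ℕ := sInf {m | ∃ G : DGraph, TreeSolvesESR S G ∧ G.size = m}

/-- T_AR(S): minimum number of differently-labeled terminal nodes of a decision tree
over S solving AR(S); similarly for the other problems. -/
def T_AR (S : Finset Rule) : ℕ := sInf {m | ∃ G : DGraph, TreeSolvesAR S G ∧ G.tCount = m}
def T_EAR (S : Finset Rule) : ℕ := sInf {m | ∃ G : DGraph, TreeSolvesEAR S G ∧ G.tCount = m}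
def T_AD (S : Finset Rule) : ℕ := sInf {m | ∃ G : DGraph, TreeSolvesAD S G ∧ G.tCount = m}
def T_EAD (S : Finset Rule) : ℕ := sInf {m | ∃ G : DGraph, TreeSolvesEAD S G ∧ G.tCount = m}
def T_SR (S : Finset Rule) : ℕ := sInf {m | ∃ G : DGraph, TreeSolvesSR S G ∧ G.tCount = m}
def T_ESR (S : Finset Rule) : ℕ := sInf {m | ∃ G : DGraph, TreeSolvesESR S G ∧ G.tCount = m}

/-- h_AR(S): minimum depth of a decision tree over S solving AR(S); similarly for the others. -/
def h_AR (S : Finset Rule) : ℕ := sInf {m | ∃ G : DGraph, TreeSolvesAR S G ∧ G.depth = m}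
def h_EAR (S : Finset Rule) : ℕ := sInf {m | ∃ G : DGraph, TreeSolvesEAR S G ∧ G.depth = m}
def h_AD (S : Finset Rule) : ℕ := sInf {m | ∃ G : DGraph, TreeSolvesAD S G ∧ G.depth = m}
def h_EAD (S : Finset Rule) : ℕ := sInf {m | ∃ G : DGraph, TreeSolvesEAD S G ∧ G.depth = m}
def h_SR (S : Finset Rule) : ℕ := sInf {m | ∃ G : DGraph, TreeSolvesSR S G ∧ G.depth = m}
def h_ESR (S : Finset Rule) : ℕ := sInf {m | ∃ G : DGraph, TreeSolvesESR S G ∧ G.depth = m}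

/-- L^DG_SR(S): minimum number of nodes of an acyclic decision graph solving SR(S). -/
def LDG_SR (S : Finset Rule) : ℕ :=
  sInf {m | ∃ G : DGraph, G.IsDG S false ∧ G.SolvesSR S ∧ G.size = m}
/-- L^DG_ESR(S): minimum number of nodes of an acyclic decision graph solving ESR(S). -/
def LDG_ESR (S : Finset Rule) : ℕ :=
  sInf {m | ∃ G : DGraph, G.IsDG S true ∧ G.SolvesSR S ∧ G.size = m}

/-- A node cover of the hypergraph G(S). -/
def IsNodeCover (S : Finset Rule) (B : Finset ℕ) : Prop :=
  B ⊆ attrs S ∧ ∀ r ∈ S, (Rule.attrs r).Nonempty → (Rule.attrs r ∩ B).Nonempty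

/-- β(S): the minimum cardinality of a node cover of the hypergraph G(S). -/
def beta (S : Finset Rule) : ℕ := sInf {c | ∃ B, IsNodeCover S B ∧ B.card = c}

/-- S⁺: the subsystem of S consisting of all rules of length d(S). -/
def Splus (S : Finset Rule) : Finset Rule := S.filter fun r => r.len = dPar S

/-- β⁺(S) = β(S⁺). -/
def betaPlus (S : Finset Rule) : ℕ := beta (Splus S)

/-- The rule r_α : delete from the left-hand side of r all equations belonging to α. -/
def Rule.restrict (r : Rule) (α : Finset (ℕ × Option ℕ)) : Rule :=
  ⟨r.K.filter fun p => (p.1, some p.2) ∉ α, r.rhs⟩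

/-- S_α : the system of the rules r_α for all r ∈ S with K(r) ∪ α consistent. -/
def restrict (S : Finset Rule) (α : Finset (ℕ × Option ℕ)) : Finset Rule :=
  (S.filter fun r => ConsistentE (liftK r.K ∪ α)).image fun r => r.restrict α

/-- E_C(S): consistent equation systems whose attributes are in A(S) and whose
values belong to V_S (ext = false) resp. EV_S (ext = true). -/
def ESys (S : Finset Rule) (ext : Bool) : Set (Finset (ℕ × Option ℕ)) :=
  {α | ConsistentE α ∧ ∀ p ∈ α, p.1 ∈ attrs S ∧ p.2 ∈ allowed S ext p.1}

/-- I_SR(S). -/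
def I_SR (S : Finset Rule) : Finset Rule :=
  if ∃ r ∈ S, r.len = 0 then S.filter fun r => r.len = 0 else S

/-- D₀(S): the right-hand sides of the rules of S of length 0. -/
def D0 (S : Finset Rule) : Finset ℕ := (S.filter fun r => r.len = 0).image Rule.rhs

/-- I_AD(S). -/
def I_AD (S : Finset Rule) : Finset Rule :=
  S.filter fun r => r.len = 0 ∨ r.rhs ∉ D0 S

def betaC (S : Finset Rule) (ext : Bool) : ℕ :=
  sSup {b | ∃ α ∈ ESys S ext, beta (restrict S α) = b}
def betaCplus (S : Finset Rule) (ext : Bool) : ℕ :=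
  sSup {b | ∃ α ∈ ESys S ext, betaPlus (restrict S α) = b}
def betaI (S : Finset Rule) (I : Finset Rule → Finset Rule) : ℕ :=
  sSup {b | ∃ α ∈ ESys S true, beta (I (restrict S α)) = b}
def betaIplus (S : Finset Rule) (I : Finset Rule → Finset Rule) : ℕ :=
  sSup {b | ∃ α ∈ ESys S true, betaPlus (I (restrict S α)) = b}

def beta_AR (S : Finset Rule) : ℕ := betaC S false
def beta_AD (S : Finset Rule) : ℕ := betaC S false
def beta_SR (S : Finset Rule) : ℕ := betaC S false
def beta_EAR (S : Finset Rule) : ℕ := betaC S true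
def beta_ARplus (S : Finset Rule) : ℕ := betaCplus S false
def beta_ADplus (S : Finset Rule) : ℕ := betaCplus S false
def beta_SRplus (S : Finset Rule) : ℕ := betaCplus S false
def beta_EARplus (S : Finset Rule) : ℕ := betaCplus S true
def beta_EAD (S : Finset Rule) : ℕ := betaI S I_AD
def beta_EADplus (S : Finset Rule) : ℕ := betaIplus S I_AD
def beta_ESR (S : Finset Rule) : ℕ := betaI S I_SR
def beta_ESRplus (S : Finset Rule) : ℕ := betaIplus S I_SR

/-- R_SR(S). -/
def R_SR (S : Finset Rule) : Finset Rule :=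
  S.filter fun r => ¬ ∃ r' ∈ S, r'.K ⊂ r.K

/-- R_AD(S). -/
def R_AD (S : Finset Rule) : Finset Rule :=
  S.filter fun r => ¬ ∃ r' ∈ S, r'.K ⊂ r.K ∧ r'.rhs = r.rhs

/-- A reduced decision rule system. -/
def Reduced (S : Finset Rule) : Prop :=
  attrs S ⊆ Finset.range (nPar S + 1) ∧
  rhsSet S ⊆ Finset.range ((rhsSet S).card + 1) ∧
  (∀ i ∈ attrs S, VS S i ⊆ Finset.range (kPar S + 1)) ∧
  1 ≤ dPar S

/-- Length of the binary representation of a natural number. -/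
def bitLen (m : ℕ) : ℕ := max 1 (Nat.size m)

/-- The length of the word "(a⟨i⟩=⟨δ⟩)" encoding one equation. -/
def eqLen (p : ℕ × ℕ) : ℕ := 4 + bitLen p.1 + bitLen p.2

/-- The length of the word encoding one rule (with the "∧" signs and "→"). -/
def Rule.wordLen (r : Rule) : ℕ :=
  (∑ p ∈ r.K, eqLen p) + (r.K.card - 1) + 1 + bitLen r.rhs

/-- size(S): the length of the word representing S (with ";" separating the rules). -/
def sizeS (S : Finset Rule) : ℕ := (∑ r ∈ S, r.wordLen) + (S.card - 1)

/-! ### Part 1: basic lemmas -/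

section Basic

lemma consistentE_mono {A B : Finset (ℕ × Option ℕ)} (h : A ⊆ B) (hB : ConsistentE B) :
    ConsistentE A := fun p hp q hq => hB p (h hp) q (h hq)

lemma consistentE_empty : ConsistentE (∅ : Finset (ℕ × Option ℕ)) := by
  intro p hp; simp at hp

lemma mem_liftK {K : Finset (ℕ × ℕ)} {x : ℕ × Option ℕ} :
    x ∈ liftK K ↔ ∃ δ, (x.1, δ) ∈ K ∧ x.2 = some δ := by
  unfold liftK
  simp only [Finset.mem_image, Prod.ext_iff]
  constructor
  · rintro ⟨p, hp, h1, h2⟩; exact ⟨p.2, by simpa [← h1] using hp, h2.symm⟩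
  · rintro ⟨δ, hδ, h2⟩; exact ⟨(x.1, δ), hδ, rfl, h2.symm⟩

lemma liftK_mono {K K' : Finset (ℕ × ℕ)} (h : K ⊆ K') : liftK K ⊆ liftK K' :=
  Finset.image_subset_image h

lemma liftK_card (K : Finset (ℕ × ℕ)) : (liftK K).card = K.card :=
  Finset.card_image_of_injective _ (fun p q h => by
    simpa [Prod.ext_iff] using h)

lemma consistentE_liftK {r : Rule} (h : r.WF) : ConsistentE (liftK r.K) := by
  intro p hp q hq hpq
  rcases mem_liftK.1 hp with ⟨δ, hδ, hp2⟩
  rcases mem_liftK.1 hq with ⟨δ', hδ', hq2⟩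
  have := h _ hδ _ hδ' (by simpa using hpq)
  rw [hp2, hq2]
  simp [Prod.ext_iff] at this
  rw [this.2]

lemma consistentE_union_iff {A B : Finset (ℕ × Option ℕ)} :
    ConsistentE (A ∪ B) ↔ ConsistentE A ∧ ConsistentE B ∧
      ∀ p ∈ A, ∀ q ∈ B, p.1 = q.1 → p.2 = q.2 := by
  constructor
  · intro h
    exact ⟨consistentE_mono Finset.subset_union_left h,
      consistentE_mono Finset.subset_union_right h,
      fun p hp q hq => h p (Finset.mem_union_left _ hp) q (Finset.mem_union_right _ hq)⟩
  · rintro ⟨hA, hB, hAB⟩ p hp q hq hpq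
    rcases Finset.mem_union.1 hp with hp' | hp' <;> rcases Finset.mem_union.1 hq with hq' | hq'
    · exact hA p hp' q hq' hpq
    · exact hAB p hp' q hq' hpq
    · exact (hAB q hq' p hp' hpq.symm).symm
    · exact hB p hp' q hq' hpq

lemma not_consistent_union {A B : Finset (ℕ × Option ℕ)} (hA : ConsistentE A)
    (hB : ConsistentE B) (h : ¬ ConsistentE (A ∪ B)) :
    ∃ a x y, (a, x) ∈ A ∧ (a, y) ∈ B ∧ x ≠ y := by
  rw [consistentE_union_iff] at h
  push_neg at h
  rcases h hA hB with ⟨p, hp, q, hq, h1, h2⟩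
  exact ⟨p.1, p.2, q.2, by simpa using hp, by rw [h1]; simpa using hq, h2⟩

/-- Every rule of `S` contains (the K of) a rule of `R_SR S`. -/
lemma exists_RSR_le {S : Finset Rule} {r : Rule} (hr : r ∈ S) :
    ∃ r' ∈ R_SR S, r'.K ⊆ r.K := by
  classical
  set t : Finset (Finset (ℕ × ℕ)) := (S.filter fun r' => r'.K ⊆ r.K).image Rule.K with ht
  have hne : t.Nonempty := ⟨r.K, Finset.mem_image.2 ⟨r, Finset.mem_filter.2 ⟨hr, le_refl _⟩, rfl⟩⟩
  obtain ⟨m, hm, hmin⟩ := t.exists_minimal hne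
  rcases Finset.mem_image.1 hm with ⟨r', hr', hKr'⟩
  rcases Finset.mem_filter.1 hr' with ⟨hr'S, hr'sub⟩
  refine ⟨r', ?_, hKr' ▸ hr'sub⟩
  rw [R_SR, Finset.mem_filter]
  refine ⟨hr'S, ?_⟩
  rintro ⟨r'', hr''S, hlt⟩
  have hlt' : r''.K ⊂ m := hKr' ▸ hlt
  exact hlt'.2 (hmin (Finset.mem_image.2 ⟨r'', Finset.mem_filter.2
    ⟨hr''S, (subset_of_ssubset hlt).trans hr'sub⟩, rfl⟩) hlt'.1)

lemma RSR_subset (S : Finset Rule) : R_SR S ⊆ S := Finset.filter_subset _ _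

lemma RSR_nonempty {S : Finset Rule} (hS : S.Nonempty) : (R_SR S).Nonempty := by
  rcases hS with ⟨r, hr⟩
  rcases exists_RSR_le hr with ⟨r', hr', -⟩
  exact ⟨r', hr'⟩

lemma attrs_mono {S T : Finset Rule} (h : S ⊆ T) : attrs S ⊆ attrs T :=
  Finset.biUnion_subset_biUnion_of_subset_left _ h

lemma mem_attrs {S : Finset Rule} {a : ℕ} :
    a ∈ attrs S ↔ ∃ r ∈ S, ∃ δ, (a, δ) ∈ r.K := by
  unfold attrs Rule.attrs
  simp only [Finset.mem_biUnion, Finset.mem_image]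
  constructor
  · rintro ⟨r, hrS, p, hp, hpa⟩
    exact ⟨r, hrS, p.2, by rw [show (a, p.2) = p from Prod.ext hpa.symm rfl]; exact hp⟩
  · rintro ⟨r, hrS, δ, hδ⟩; exact ⟨r, hrS, (a, δ), hδ, rfl⟩

lemma mem_VS {S : Finset Rule} {a δ : ℕ} :
    δ ∈ VS S a ↔ ∃ r ∈ S, (a, δ) ∈ r.K := by
  unfold VS
  simp only [Finset.mem_image, Finset.mem_filter, Finset.mem_biUnion]
  constructor
  · rintro ⟨p, ⟨⟨r, hr, hp⟩, hp1⟩, hp2⟩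
    exact ⟨r, hr, by rw [show (a, δ) = p from Prod.ext hp1.symm hp2.symm]; exact hp⟩
  · rintro ⟨r, hr, h⟩; exact ⟨(a, δ), ⟨⟨r, hr, h⟩, rfl⟩, rfl⟩

lemma VS_mono {S T : Finset Rule} (h : S ⊆ T) (a : ℕ) : VS S a ⊆ VS T a := by
  intro δ hδ
  rcases mem_VS.1 hδ with ⟨r, hr, hk⟩
  exact mem_VS.2 ⟨r, h hr, hk⟩

lemma none_mem_allowed (S : Finset Rule) (a : ℕ) : none ∈ allowed S true a := by
  simp [allowed]

lemma some_mem_allowed {S : Finset Rule} {a δ : ℕ} (h : δ ∈ VS S a) (ext : Bool) :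
    some δ ∈ allowed S ext a := by
  unfold allowed
  exact Finset.mem_union_left _ (Finset.mem_image.2 ⟨δ, h, rfl⟩)

lemma mem_allowed_true {S : Finset Rule} {a : ℕ} {l : Option ℕ} :
    l ∈ allowed S true a ↔ l = none ∨ ∃ δ ∈ VS S a, l = some δ := by
  unfold allowed
  simp only [if_pos, Finset.mem_union, Finset.mem_image, Finset.mem_singleton]
  constructor
  · rintro (⟨δ, hδ, h⟩ | h)
    · exact Or.inr ⟨δ, hδ, h.symm⟩
    · exact Or.inl h
  · rintro (h | ⟨δ, hδ, h⟩)
    · exact Or.inr h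
    · exact Or.inl ⟨δ, hδ, h.symm⟩

/-- `r.restrict α` membership in its K. -/
lemma mem_restrictK {r : Rule} {α : Finset (ℕ × Option ℕ)} {p : ℕ × ℕ} :
    p ∈ (r.restrict α).K ↔ p ∈ r.K ∧ (p.1, some p.2) ∉ α := by
  unfold Rule.restrict
  simp

lemma restrictK_subset (r : Rule) (α : Finset (ℕ × Option ℕ)) :
    (r.restrict α).K ⊆ r.K := Finset.filter_subset _ _

lemma restrict_anti {r : Rule} {α β : Finset (ℕ × Option ℕ)} (h : α ⊆ β) :
    (r.restrict β).K ⊆ (r.restrict α).K := by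
  intro p hp
  rw [mem_restrictK] at hp ⊢
  exact ⟨hp.1, fun hc => hp.2 (h hc)⟩

lemma restrict_empty (r : Rule) : (r.restrict ∅).K = r.K := by
  unfold Rule.restrict
  simp

lemma mem_restrict {S : Finset Rule} {α : Finset (ℕ × Option ℕ)} {r₀ : Rule} :
    r₀ ∈ restrict S α ↔ ∃ r ∈ S, ConsistentE (liftK r.K ∪ α) ∧ r₀ = r.restrict α := by
  unfold restrict
  simp only [Finset.mem_image, Finset.mem_filter]
  constructor
  · rintro ⟨r, ⟨h1, h2⟩, h3⟩; exact ⟨r, h1, h2, h3.symm⟩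
  · rintro ⟨r, h1, h2, h3⟩; exact ⟨r, ⟨h1, h2⟩, h3.symm⟩

lemma restrict_mem {S : Finset Rule} {α : Finset (ℕ × Option ℕ)} {r : Rule}
    (hr : r ∈ S) (h : ConsistentE (liftK r.K ∪ α)) : r.restrict α ∈ restrict S α :=
  mem_restrict.2 ⟨r, hr, h, rfl⟩

lemma attrs_restrict_subset (S : Finset Rule) (α : Finset (ℕ × Option ℕ)) :
    attrs (restrict S α) ⊆ attrs S := by
  intro a ha
  rcases mem_attrs.1 ha with ⟨r₀, hr₀, δ, hδ⟩
  rcases mem_restrict.1 hr₀ with ⟨r, hrS, -, rfl⟩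
  exact mem_attrs.2 ⟨r, hrS, δ, restrictK_subset _ _ hδ⟩

lemma attrs_nonempty_of_len_pos {r : Rule} (h : 0 < r.len) : r.attrs.Nonempty := by
  rw [Rule.len, Finset.card_pos] at h
  exact h.image _

lemma mem_rule_attrs {r : Rule} {a : ℕ} : a ∈ r.attrs ↔ ∃ δ, (a, δ) ∈ r.K := by
  unfold Rule.attrs
  simp only [Finset.mem_image]
  constructor
  · rintro ⟨p, hp, rfl⟩; exact ⟨p.2, hp⟩
  · rintro ⟨δ, hδ⟩; exact ⟨(a, δ), hδ, rfl⟩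

end Basic

/-! ### Part 2: node covers and normalization -/

section Beta

lemma attrs_empty_of_len_zero {r : Rule} (h : r.len = 0) : r.attrs = ∅ := by
  rw [Rule.len, Finset.card_eq_zero] at h
  rw [Rule.attrs, h, Finset.image_empty]

lemma isNodeCover_attrs (X : Finset Rule) : IsNodeCover X (attrs X) := by
  refine ⟨subset_rfl, fun r hr h => ?_⟩
  rcases h with ⟨a, ha⟩
  exact ⟨a, Finset.mem_inter.2 ⟨ha, mem_attrs.2 ⟨r, hr, mem_rule_attrs.1 ha⟩⟩⟩

lemma beta_le_of_cover {X : Finset Rule} {B : Finset ℕ} (h : IsNodeCover X B) :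
    beta X ≤ B.card := Nat.sInf_le ⟨B, h, rfl⟩

lemma exists_beta_cover (X : Finset Rule) : ∃ B, IsNodeCover X B ∧ B.card = beta X := by
  have hne : {c | ∃ B, IsNodeCover X B ∧ B.card = c}.Nonempty :=
    ⟨(attrs X).card, attrs X, isNodeCover_attrs X, rfl⟩
  exact Nat.sInf_mem hne

lemma beta_le_card_attrs (X : Finset Rule) : beta X ≤ (attrs X).card :=
  beta_le_of_cover (isNodeCover_attrs X)

lemma beta_eq_zero_of_all_len_zero {X : Finset Rule} (h : ∀ r ∈ X, r.len = 0) :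
    beta X = 0 := by
  have : IsNodeCover X ∅ := by
    refine ⟨Finset.empty_subset _, fun r hr hne => ?_⟩
    rw [attrs_empty_of_len_zero (h r hr)] at hne
    exact absurd hne (by simp)
  simpa using beta_le_of_cover this

lemma I_SR_subset (X : Finset Rule) : I_SR X ⊆ X := by
  rw [I_SR]
  split
  · exact Finset.filter_subset _ _
  · exact subset_rfl

lemma Splus_subset (X : Finset Rule) : Splus X ⊆ X := Finset.filter_subset _ _

/-- Normalization of an equation system with respect to a system `T`. -/
def normA (T : Finset Rule) (α : Finset (ℕ × Option ℕ)) : Finset (ℕ × Option ℕ) :=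
  (α.filter fun p => p.1 ∈ attrs T).image fun p =>
    (p.1, if p.2 ∈ (VS T p.1).image some then p.2 else none)

lemma mem_normA {T : Finset Rule} {α : Finset (ℕ × Option ℕ)} {x : ℕ × Option ℕ} :
    x ∈ normA T α ↔ ∃ v, (x.1, v) ∈ α ∧ x.1 ∈ attrs T ∧
      x.2 = if v ∈ (VS T x.1).image some then v else none := by
  unfold normA
  constructor
  · intro h
    rcases Finset.mem_image.1 h with ⟨p, hp, he⟩
    rcases Finset.mem_filter.1 hp with ⟨hpα, hp1⟩
    subst he
    exact ⟨p.2, hpα, hp1, rfl⟩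
  · rintro ⟨v, hv, h1, h2⟩
    refine Finset.mem_image.2 ⟨(x.1, v), Finset.mem_filter.2 ⟨hv, h1⟩, ?_⟩
    rw [Prod.ext_iff]
    exact ⟨rfl, h2.symm⟩

lemma normA_consistent {T : Finset Rule} {α : Finset (ℕ × Option ℕ)}
    (hα : ConsistentE α) : ConsistentE (normA T α) := by
  intro p hp q hq hpq
  rcases mem_normA.1 hp with ⟨v, hv, -, h2⟩
  rcases mem_normA.1 hq with ⟨w, hw, -, h2'⟩
  have hvw : v = w := hα (p.1, v) hv (q.1, w) hw hpq
  rw [h2, h2', hvw, hpq]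

lemma normA_mem_ESys {T : Finset Rule} {α : Finset (ℕ × Option ℕ)}
    (hα : ConsistentE α) : normA T α ∈ ESys T true := by
  refine ⟨normA_consistent hα, fun p hp => ?_⟩
  rcases mem_normA.1 hp with ⟨v, hv, h1, h2⟩
  refine ⟨h1, ?_⟩
  rw [h2]
  split
  · next h => rcases Finset.mem_image.1 h with ⟨δ, hδ, rfl⟩; exact some_mem_allowed hδ _
  · exact none_mem_allowed _ _

/-- Key compatibility: equations of a rule of `T` behave identically w.r.t. `α` and its
normalization. -/
lemma mem_normA_iff_of_rule {T : Finset Rule} {α : Finset (ℕ × Option ℕ)} {r : Rule}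
    (hr : r ∈ T) {a δ : ℕ} (hK : (a, δ) ∈ r.K) :
    (a, some δ) ∈ normA T α ↔ (a, some δ) ∈ α := by
  have hVS : δ ∈ VS T a := mem_VS.2 ⟨r, hr, hK⟩
  constructor
  · intro h
    rcases mem_normA.1 h with ⟨v, hv, -, h2⟩
    have h2' : some δ = if v ∈ (VS T a).image some then v else none := h2
    have hv' : (a, v) ∈ α := hv
    split at h2'
    · rw [← h2'] at hv'; exact hv'
    · exact absurd h2' (by simp)
  · intro h
    exact mem_normA.2 ⟨some δ, h, mem_attrs.2 ⟨r, hr, δ, hK⟩,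
      show (some δ : Option ℕ) = if some δ ∈ (VS T a).image some then some δ else none from
        (if_pos (Finset.mem_image.2 ⟨δ, hVS, rfl⟩)).symm⟩

lemma consistent_normA_iff {T : Finset Rule} {α : Finset (ℕ × Option ℕ)} {r : Rule}
    (hr : r ∈ T) (hrc : ConsistentE (liftK r.K)) (hα : ConsistentE α) :
    ConsistentE (liftK r.K ∪ normA T α) ↔ ConsistentE (liftK r.K ∪ α) := by
  rw [consistentE_union_iff, consistentE_union_iff]
  constructor
  · rintro ⟨-, -, hcross⟩
    refine ⟨hrc, hα, fun p hp q hq hpq => ?_⟩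
    rcases mem_liftK.1 hp with ⟨δ, hδ, hp2⟩
    have haT : q.1 ∈ attrs T := mem_attrs.2 ⟨r, hr, δ, by rw [← hpq]; exact hδ⟩
    have hq' : ((q.1 : ℕ), if q.2 ∈ (VS T q.1).image some then q.2 else none) ∈ normA T α :=
      mem_normA.2 ⟨q.2, hq, haT, rfl⟩
    have hthis : p.2 = if q.2 ∈ (VS T q.1).image some then q.2 else none :=
      hcross p hp _ hq' hpq
    split at hthis
    · exact hthis
    · rw [hp2] at hthis; exact absurd hthis (by simp)
  · rintro ⟨-, -, hcross⟩
    refine ⟨hrc, normA_consistent hα, fun p hp q hq hpq => ?_⟩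
    rcases mem_normA.1 hq with ⟨v, hv, -, h2⟩
    have hcr : p.2 = v := hcross p hp (q.1, v) hv hpq
    rcases mem_liftK.1 hp with ⟨δ, hδ, hp2⟩
    have hVS : δ ∈ VS T q.1 := mem_VS.2 ⟨r, hr, by rw [← hpq]; exact hδ⟩
    have hv2 : v = some δ := by rw [← hcr, hp2]
    rw [h2, hv2, if_pos (Finset.mem_image.2 ⟨δ, hVS, rfl⟩), hp2]

lemma restrict_normA {T : Finset Rule} {α : Finset (ℕ × Option ℕ)}
    (hT : ∀ r ∈ T, ConsistentE (liftK r.K)) (hα : ConsistentE α) :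
    restrict T (normA T α) = restrict T α := by
  apply Finset.ext
  intro r₀
  rw [mem_restrict, mem_restrict]
  constructor
  · rintro ⟨r, hr, hc, rfl⟩
    refine ⟨r, hr, (consistent_normA_iff hr (hT r hr) hα).1 hc, ?_⟩
    unfold Rule.restrict
    congr 1
    apply Finset.filter_congr
    intro p hp
    exact not_congr (mem_normA_iff_of_rule hr (show (p.1, p.2) ∈ r.K from hp))
  · rintro ⟨r, hr, hc, rfl⟩
    refine ⟨r, hr, (consistent_normA_iff hr (hT r hr) hα).2 hc, ?_⟩
    unfold Rule.restrict
    congr 1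
    apply Finset.filter_congr
    intro p hp
    exact not_congr (mem_normA_iff_of_rule hr (show (p.1, p.2) ∈ r.K from hp)).symm

lemma betaIplus_bddAbove (T : Finset Rule) :
    BddAbove {b | ∃ α ∈ ESys T true, betaPlus (I_SR (restrict T α)) = b} := by
  refine ⟨(attrs T).card, ?_⟩
  rintro b ⟨α, hα, rfl⟩
  calc betaPlus (I_SR (restrict T α)) ≤ (attrs (Splus (I_SR (restrict T α)))).card :=
        beta_le_card_attrs _
    _ ≤ (attrs T).card := Finset.card_le_card (le_trans
        (attrs_mono (le_trans (Splus_subset _) (I_SR_subset _)))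
        (attrs_restrict_subset _ _))

lemma betaPlus_restrict_le {T : Finset Rule} (hT : ∀ r ∈ T, ConsistentE (liftK r.K))
    {α : Finset (ℕ × Option ℕ)} (hα : ConsistentE α)
    (hno : ¬ ∃ r ∈ restrict T α, r.len = 0) :
    beta (Splus (restrict T α)) ≤ betaIplus T I_SR := by
  have h1 : I_SR (restrict T α) = restrict T α := by rw [I_SR, if_neg hno]
  have hmem : betaPlus (I_SR (restrict T (normA T α))) ∈
      {b | ∃ α' ∈ ESys T true, betaPlus (I_SR (restrict T α')) = b} :=
    ⟨normA T α, normA_mem_ESys hα, rfl⟩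
  have := le_csSup (betaIplus_bddAbove T) hmem
  rwa [restrict_normA hT hα, h1] at this

end Beta

/-! ### Part 3: inductive trees and their compilation to decision graphs -/

inductive PT : Type where
  | leaf : Finset Rule → PT
  | node : ℕ → (Option ℕ → PT) → PT

namespace PT

variable (S : Finset Rule)

def follow : PT → List (Option ℕ) → Option PT
  | t, [] => some t
  | .leaf _, _ :: _ => none
  | .node a c, l :: p => if l ∈ allowed S true a then follow (c l) p else none

def paths : PT → Finset (List (Option ℕ))
  | .leaf _ => {[]}
  | .node a c => insert [] ((allowed S true a).biUnion fun l => (paths (c l)).image (l :: ·))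

def Ok : PT → Finset (ℕ × Option ℕ) → Prop
  | .leaf Z, E => ConsistentE E → (∀ r ∈ Z, liftK r.K ⊆ E) ∧
      (Z = ∅ → ∀ r ∈ S, ¬ ConsistentE (liftK r.K ∪ E))
  | .node a c, E => ∀ l ∈ allowed S true a, Ok (c l) (insert (a, l) E)

def hgt : PT → ℕ
  | .leaf _ => 0
  | .node a c => ((allowed S true a).sup fun l => hgt (c l)) + 1

def WFt : PT → Prop
  | .leaf Z => Z ⊆ S
  | .node a c => a ∈ attrs S ∧ ∀ l, WFt (c l)

lemma follow_nil (t : PT) : follow S t [] = some t := by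
  cases t <;> rfl

lemma follow_append (p q : List (Option ℕ)) : ∀ t : PT,
    follow S t (p ++ q) = (follow S t p).bind (fun t' => follow S t' q) := by
  induction p with
  | nil => intro t; rw [List.nil_append, follow_nil]; rfl
  | cons l p ih =>
    intro t
    cases t with
    | leaf Z => simp [follow]
    | node a c =>
      simp only [List.cons_append, follow]
      split
      · exact ih (c l)
      · simp

lemma mem_paths (t : PT) : ∀ p, p ∈ paths S t ↔ (follow S t p).isSome := by
  induction t with
  | leaf Z => intro p; cases p <;> simp [paths, follow]
  | node a c ih =>
    intro p
    cases p with
    | nil => simp [paths, follow]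
    | cons l p =>
      simp only [paths, Finset.mem_insert, Finset.mem_biUnion, Finset.mem_image, follow]
      constructor
      · rintro (h | ⟨l', hl', q, hq, he⟩)
        · exact absurd h (by simp)
        · injection he with h1 h2
          subst h1
          subst h2
          rw [if_pos hl']
          exact (ih _ _).1 hq
      · intro h
        rw [show (if l ∈ allowed S true a then follow S (c l) p else none) =
          follow S (.node a c) (l :: p) from rfl] at h
        by_cases hl : l ∈ allowed S true a
        · refine Or.inr ⟨l, hl, p, ?_, rfl⟩
          apply (ih l p).2
          have : follow S (.node a c) (l :: p) = follow S (c l) p := by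
            simp [follow, if_pos hl]
          rwa [this] at h
        · exfalso
          have : follow S (.node a c) (l :: p) = none := by simp [follow, if_neg hl]
          rw [this] at h; simp at h

lemma nil_mem_paths (t : PT) : [] ∈ paths S t := by
  cases t <;> simp [paths]

lemma WFt_follow {t t' : PT} (hw : WFt S t) {p : List (Option ℕ)}
    (h : follow S t p = some t') : WFt S t' := by
  induction p generalizing t with
  | nil => rw [follow_nil] at h; injection h with h'; rwa [← h']
  | cons l p ih =>
    cases t with
    | leaf Z => simp [follow] at h
    | node a c =>
      simp only [follow] at h
      split at h
      · exact ih (hw.2 l) h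
      · simp at h

end PT

section Compile

variable (S : Finset Rule) (t : PT)

def nC : ℕ := (PT.paths S t).card

def codes : Finset ℕ := (PT.paths S t).image Encodable.encode

lemma codes_card : (codes S t).card = nC S t :=
  Finset.card_image_of_injective _ Encodable.encode_injective

def isoC : Fin (nC S t) ≃o {x // x ∈ codes S t} :=
  (codes S t).orderIsoOfFin (codes_card S t)

def idx (p : List (Option ℕ)) : ℕ :=
  if h : Encodable.encode p ∈ codes S t then ((isoC S t).symm ⟨_, h⟩ : Fin (nC S t)) else 0

def decp (v : ℕ) : List (Option ℕ) :=
  if h : v < nC S t then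
    ((Encodable.decode (((isoC S t) ⟨v, h⟩ : {x // x ∈ codes S t}) : ℕ)).getD [])
  else []

lemma idx_lt {p : List (Option ℕ)} (h : p ∈ PT.paths S t) : idx S t p < nC S t := by
  have hc : Encodable.encode p ∈ codes S t := Finset.mem_image_of_mem _ h
  rw [idx, dif_pos hc]
  exact Fin.isLt _

lemma decp_idx {p : List (Option ℕ)} (h : p ∈ PT.paths S t) : decp S t (idx S t p) = p := by
  have hc : Encodable.encode p ∈ codes S t := Finset.mem_image_of_mem _ h
  rw [idx, dif_pos hc, decp, dif_pos (Fin.isLt _)]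
  have : (isoC S t) ⟨((isoC S t).symm ⟨_, hc⟩ : Fin (nC S t)), Fin.isLt _⟩ = ⟨Encodable.encode p, hc⟩ := by
    rw [show (⟨((isoC S t).symm ⟨_, hc⟩ : Fin (nC S t)), Fin.isLt _⟩ : Fin (nC S t)) =
      (isoC S t).symm ⟨_, hc⟩ from rfl]
    exact (isoC S t).apply_symm_apply _
  rw [this]
  simp

lemma exists_of_lt {v : ℕ} (h : v < nC S t) :
    ∃ p ∈ PT.paths S t, idx S t p = v ∧ decp S t v = p := by
  have hmem : (((isoC S t) ⟨v, h⟩ : {x // x ∈ codes S t}) : ℕ) ∈ codes S t :=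
    ((isoC S t) ⟨v, h⟩).2
  rcases Finset.mem_image.1 hmem with ⟨p, hp, he⟩
  have hc : Encodable.encode p ∈ codes S t := Finset.mem_image_of_mem _ hp
  refine ⟨p, hp, ?_, ?_⟩
  · rw [idx, dif_pos hc]
    have : (⟨Encodable.encode p, hc⟩ : {x // x ∈ codes S t}) =
        (isoC S t) ⟨v, h⟩ := by
      apply Subtype.ext; exact he
    rw [this, OrderIso.symm_apply_apply]
  · rw [decp, dif_pos h, ← he]
    simp

lemma idx_inj {p q : List (Option ℕ)} (hp : p ∈ PT.paths S t) (hq : q ∈ PT.paths S t)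
    (h : idx S t p = idx S t q) : p = q := by
  have := decp_idx S t hp
  rw [h, decp_idx S t hq] at this
  exact this.symm

def childLab (p : List (Option ℕ)) : Finset (Option ℕ) :=
  match PT.follow S t p with
  | some (.node a _) => allowed S true a
  | _ => ∅

def labOf (p : List (Option ℕ)) : ℕ ⊕ Finset Rule :=
  match PT.follow S t p with
  | some (.node a _) => .inl a
  | some (.leaf Z) => .inr Z
  | none => .inr ∅

def compile : DGraph where
  n := nC S t
  root := idx S t []
  label := fun v => labOf S t (decp S t v)
  edges := (PT.paths S t).biUnion fun p =>
    (childLab S t p).image fun l => (idx S t p, l, idx S t (p ++ [l]))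

lemma childLab_node {p : List (Option ℕ)} {a : ℕ} {c : Option ℕ → PT}
    (h : PT.follow S t p = some (.node a c)) : childLab S t p = allowed S true a := by
  rw [childLab, h]

lemma childLab_leaf {p : List (Option ℕ)} {Z : Finset Rule}
    (h : PT.follow S t p = some (.leaf Z)) : childLab S t p = ∅ := by
  rw [childLab, h]

lemma append_mem_paths {p : List (Option ℕ)} {l : Option ℕ} :
    p ++ [l] ∈ PT.paths S t ↔ p ∈ PT.paths S t ∧ l ∈ childLab S t p := by
  rw [PT.mem_paths, PT.mem_paths, PT.follow_append]
  rcases hf : PT.follow S t p with - | t'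
  · simp [childLab, hf]
  · cases t' with
    | leaf Z => simp [childLab, hf, PT.follow]
    | node a c =>
      rw [childLab_node S t hf]
      by_cases hl : l ∈ allowed S true a <;> simp [PT.follow, hl]

lemma mem_edges {e : ℕ × Option ℕ × ℕ} :
    e ∈ (compile S t).edges ↔ ∃ p ∈ PT.paths S t, ∃ l ∈ childLab S t p,
      e = (idx S t p, l, idx S t (p ++ [l])) := by
  simp only [compile, Finset.mem_biUnion, Finset.mem_image]
  constructor
  · rintro ⟨p, hp, l, hl, he⟩; exact ⟨p, hp, l, hl, he.symm⟩
  · rintro ⟨p, hp, l, hl, he⟩; exact ⟨p, hp, l, hl, he.symm⟩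

lemma isTerminal_iff {p : List (Option ℕ)} (hp : p ∈ PT.paths S t) :
    (compile S t).IsTerminal (idx S t p) ↔ ∃ Z, PT.follow S t p = some (.leaf Z) := by
  constructor
  · intro hterm
    have := (PT.mem_paths S t p).1 hp
    rcases hf : PT.follow S t p with - | t'
    · rw [hf] at this; simp at this
    · cases t' with
      | leaf Z => exact ⟨Z, rfl⟩
      | node a c =>
        exfalso
        have hnone : (none : Option ℕ) ∈ childLab S t p := by
          rw [childLab_node S t hf]; exact none_mem_allowed S a
        exact hterm (idx S t p, none, idx S t (p ++ [none]))
          (mem_edges S t |>.2 ⟨p, hp, none, hnone, rfl⟩) rfl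
  · rintro ⟨Z, hZ⟩ e he
    rcases (mem_edges S t).1 he with ⟨q, hq, l, hl, rfl⟩
    intro h
    have : q = p := idx_inj S t hq hp h
    rw [this, childLab_leaf S t hZ] at hl
    simp at hl

lemma termSet_eq {p : List (Option ℕ)} (hp : p ∈ PT.paths S t) {Z : Finset Rule}
    (hZ : PT.follow S t p = some (.leaf Z)) :
    (compile S t).termSet (idx S t p) = Z := by
  show Sum.elim (fun _ => (∅ : Finset Rule)) id (labOf S t (decp S t (idx S t p))) = Z
  rw [decp_idx S t hp, labOf, hZ]
  rfl

lemma label_node {p : List (Option ℕ)} (hp : p ∈ PT.paths S t) {a : ℕ} {c : Option ℕ → PT}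
    (h : PT.follow S t p = some (.node a c)) :
    (compile S t).label (idx S t p) = .inl a := by
  show labOf S t (decp S t (idx S t p)) = .inl a
  rw [decp_idx S t hp, labOf, h]

lemma step_len {u v : ℕ} (h : (compile S t).step u v) :
    ∃ p ∈ PT.paths S t, ∃ l ∈ childLab S t p, u = idx S t p ∧ v = idx S t (p ++ [l]) := by
  rcases h with ⟨l, hl⟩
  rcases (mem_edges S t).1 hl with ⟨p, hp, l', hl', he⟩
  simp only [Prod.mk.injEq] at he
  exact ⟨p, hp, l', hl', he.1, he.2.2⟩

lemma acyclic_compile : (compile S t).Acyclic := by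
  have hkey : ∀ u v, Relation.TransGen (compile S t).step u v →
      (decp S t u).length < (decp S t v).length := by
    intro u v h
    induction h with
    | single h =>
      rcases step_len S t h with ⟨p, hp, l, hl, rfl, rfl⟩
      rw [decp_idx S t hp, decp_idx S t ((append_mem_paths S t).2 ⟨hp, hl⟩)]
      simp
    | tail _ h2 ih =>
      refine lt_trans ih ?_
      rcases step_len S t h2 with ⟨p, hp, l, hl, rfl, rfl⟩
      rw [decp_idx S t hp, decp_idx S t ((append_mem_paths S t).2 ⟨hp, hl⟩)]
      simp
  intro v hv
  exact lt_irrefl _ (hkey v v hv)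

lemma isDG_compile (hw : PT.WFt S t) : (compile S t).IsDG S true := by
  refine ⟨idx_lt S t (PT.nil_mem_paths S t), ?_, acyclic_compile S t, ?_⟩
  · intro e he
    rcases (mem_edges S t).1 he with ⟨p, hp, l, hl, rfl⟩
    exact ⟨idx_lt S t hp, idx_lt S t ((append_mem_paths S t).2 ⟨hp, hl⟩)⟩
  · intro v hv
    rcases exists_of_lt S t hv with ⟨p, hp, rfl, hdec⟩
    have hs := (PT.mem_paths S t p).1 hp
    rcases hf : PT.follow S t p with - | t'
    · rw [hf] at hs; simp at hs
    cases t' with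
    | leaf Z =>
      rw [if_pos ((isTerminal_iff S t hp).2 ⟨Z, hf⟩)]
      exact ⟨Z, by rw [compile]; simp only; rw [hdec, labOf, hf], PT.WFt_follow S hw hf⟩
    | node a c =>
      have hnterm : ¬ (compile S t).IsTerminal (idx S t p) := by
        rw [isTerminal_iff S t hp]
        rintro ⟨Z, hZ⟩
        rw [hf] at hZ
        simp at hZ
      rw [if_neg hnterm]
      refine ⟨a, label_node S t hp hf, (PT.WFt_follow S hw hf).1, ?_, ?_⟩
      · intro l
        constructor
        · rintro ⟨w, hw'⟩
          rcases (mem_edges S t).1 hw' with ⟨q, hq, l', hl', he⟩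
          simp only [Prod.mk.injEq] at he
          obtain ⟨h1, h2, -⟩ := he
          have hqp : q = p := (idx_inj S t hp hq h1).symm
          subst hqp
          rw [h2]
          rwa [childLab_node S t hf] at hl'
        · intro hl
          exact ⟨idx S t (p ++ [l]), (mem_edges S t).2
            ⟨p, hp, l, by rwa [childLab_node S t hf], rfl⟩⟩
      · intro l w w' h1 h2
        rcases (mem_edges S t).1 h1 with ⟨q, hq, l', hl', he⟩
        rcases (mem_edges S t).1 h2 with ⟨q2, hq2, l2', hl2', he2⟩
        simp only [Prod.mk.injEq] at he he2
        have hqp : q = p := (idx_inj S t hp hq he.1).symm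
        have hq2p : q2 = p := (idx_inj S t hp hq2 he2.1).symm
        rw [he.2.2, he2.2.2, hqp, hq2p, ← he.2.1, ← he2.2.1]

lemma isTree_compile : (compile S t).IsTree := by
  constructor
  · intro e he
    rcases (mem_edges S t).1 he with ⟨p, hp, l, hl, rfl⟩
    simp only [compile]
    intro hroot
    have : p ++ [l] = [] := idx_inj S t ((append_mem_paths S t).2 ⟨hp, hl⟩)
      (PT.nil_mem_paths S t) hroot
    simp at this
  · intro v hv hvroot
    rcases exists_of_lt S t hv with ⟨p, hp, rfl, hdec⟩
    have hpne : p ≠ [] := by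
      rintro rfl
      exact hvroot rfl
    obtain ⟨q, l, rfl⟩ : ∃ q l, p = q ++ [l] := by
      rcases List.eq_nil_or_concat p with h | ⟨q, l, h⟩
      · exact absurd h hpne
      · exact ⟨q, l, by simpa [List.concat_eq_append] using h⟩
    obtain ⟨hq, hl⟩ := (append_mem_paths S t).1 hp
    refine ⟨(idx S t q, l, idx S t (q ++ [l])), ⟨(mem_edges S t).2 ⟨q, hq, l, hl, rfl⟩, rfl⟩, ?_⟩
    rintro ⟨u, l', w⟩ ⟨he, hw⟩
    rcases (mem_edges S t).1 he with ⟨q2, hq2, l2, hl2, he2⟩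
    simp only [Prod.mk.injEq] at he2
    obtain ⟨h1, h2, h3⟩ := he2
    simp only at hw
    have happ : q2 ++ [l2] = q ++ [l] :=
      idx_inj S t ((append_mem_paths S t).2 ⟨hq2, hl2⟩) hp (by rw [← h3, hw])
    obtain ⟨hq2q, hl2l⟩ : q2 = q ∧ l2 = l := by
      have := List.append_inj' happ rfl
      exact ⟨this.1, by simpa using this.2⟩
    simp only [Prod.mk.injEq]
    exact ⟨by rw [h1, hq2q], by rw [h2, hl2l], by rw [h3, hq2q, hl2l]⟩

lemma pathEqs_nil : (compile S t).pathEqs [] = ∅ := by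
  rw [DGraph.pathEqs]
  simp

lemma pathEqs_cons {p : List (Option ℕ)} (hp : p ∈ PT.paths S t) {a : ℕ} {c : Option ℕ → PT}
    (hf : PT.follow S t p = some (.node a c)) (l : Option ℕ) (rest : List (ℕ × Option ℕ)) :
    (compile S t).pathEqs ((idx S t p, l) :: rest) =
      insert (a, l) ((compile S t).pathEqs rest) := by
  rw [DGraph.pathEqs, DGraph.pathEqs]
  rw [List.filterMap_cons]
  have : (compile S t).label (idx S t p) = .inl a := label_node S t hp hf
  simp only [this, Sum.elim_inl]
  simp

lemma chain_ok : ∀ (pl : List (ℕ × Option ℕ)) (q : List (Option ℕ)) (t' : PT)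
    (E : Finset (ℕ × Option ℕ)) (tn : ℕ),
    q ∈ PT.paths S t → PT.follow S t q = some t' → PT.Ok S t' E →
    (compile S t).chainFrom (idx S t q) pl tn → (compile S t).IsTerminal tn →
    (ConsistentE (E ∪ (compile S t).pathEqs pl) →
      (∀ r ∈ (compile S t).termSet tn, liftK r.K ⊆ E ∪ (compile S t).pathEqs pl) ∧
      ((compile S t).termSet tn = ∅ →
        ∀ r ∈ S, ¬ ConsistentE (liftK r.K ∪ (E ∪ (compile S t).pathEqs pl)))) := by
  intro pl
  induction pl with
  | nil =>
    intro q t' E tn hq hf hok hchain hterm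
    have htn : idx S t q = tn := hchain
    subst htn
    rcases (isTerminal_iff S t hq).1 hterm with ⟨Z, hZ⟩
    rw [hf] at hZ
    obtain rfl : t' = .leaf Z := by injection hZ
    rw [termSet_eq S t hq hf, pathEqs_nil, Finset.union_empty]
    exact fun hc => hok hc
  | cons e rest ih =>
    intro q t' E tn hq hf hok hchain hterm
    obtain ⟨he1, w, hw, hchain'⟩ := hchain
    rcases (mem_edges S t).1 hw with ⟨p, hp, l, hl, hee⟩
    simp only [Prod.mk.injEq] at hee
    obtain ⟨h1, h2, h3⟩ := hee
    have hpq : p = q := idx_inj S t hp hq h1.symm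
    subst hpq
    have hnl : ∃ a c, PT.follow S t p = some (.node a c) := by
      rcases hft : PT.follow S t p with - | t2
      · rw [childLab, hft] at hl; simp at hl
      cases t2 with
      | leaf Z => rw [childLab_leaf S t hft] at hl; simp at hl
      | node a c => exact ⟨a, c, rfl⟩
    rcases hnl with ⟨a, c, hfn⟩
    rw [hf] at hfn
    obtain rfl : t' = .node a c := by injection hfn
    have hfn' : PT.follow S t p = some (.node a c) := hf
    have hlall : l ∈ allowed S true a := by rwa [childLab_node S t hfn'] at hl
    have hfollow2 : PT.follow S t (p ++ [l]) = some (c l) := by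
      rw [PT.follow_append, hfn']
      show PT.follow S (PT.node a c) [l] = some (c l)
      rw [show PT.follow S (PT.node a c) [l] = if l ∈ allowed S true a then PT.follow S (c l) [] else none from rfl, if_pos hlall, PT.follow_nil]
    have hmem2 : p ++ [l] ∈ PT.paths S t := (append_mem_paths S t).2 ⟨hp, hl⟩
    have hok2 : PT.Ok S (c l) (insert (a, l) E) := hok l hlall
    have := ih (p ++ [l]) (c l) (insert (a, l) E) tn hmem2 hfollow2 hok2 (h3 ▸ hchain') hterm
    have hE : e = (idx S t p, l) := by
      rw [Prod.ext_iff]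
      exact ⟨he1, h2⟩
    rw [hE, pathEqs_cons S t hp hfn' l rest]
    have hEq : insert (a, l) E ∪ (compile S t).pathEqs rest =
        E ∪ insert (a, l) ((compile S t).pathEqs rest) := by
      rw [Finset.insert_union, Finset.union_insert]
    rw [← hEq]
    exact this

lemma chain_len : ∀ (pl : List (ℕ × Option ℕ)) (q : List (Option ℕ)) (t' : PT) (tn : ℕ),
    q ∈ PT.paths S t → PT.follow S t q = some t' →
    (compile S t).chainFrom (idx S t q) pl tn → pl.length ≤ PT.hgt S t' := by
  intro pl
  induction pl with
  | nil => intro q t' tn _ _ _; simp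
  | cons e rest ih =>
    intro q t' tn hq hf hchain
    obtain ⟨he1, w, hw, hchain'⟩ := hchain
    rcases (mem_edges S t).1 hw with ⟨p, hp, l, hl, hee⟩
    simp only [Prod.mk.injEq] at hee
    obtain ⟨h1, h2, h3⟩ := hee
    have hpq : p = q := idx_inj S t hp hq h1.symm
    subst hpq
    have hnl : ∃ a c, PT.follow S t p = some (.node a c) := by
      rcases hft : PT.follow S t p with - | t2
      · rw [childLab, hft] at hl; simp at hl
      cases t2 with
      | leaf Z => rw [childLab_leaf S t hft] at hl; simp at hl
      | node a c => exact ⟨a, c, rfl⟩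
    rcases hnl with ⟨a, c, hfn⟩
    rw [hf] at hfn
    obtain rfl : t' = .node a c := by injection hfn
    have hfn' : PT.follow S t p = some (.node a c) := hf
    have hlall : l ∈ allowed S true a := by rwa [childLab_node S t hfn'] at hl
    have hfollow2 : PT.follow S t (p ++ [l]) = some (c l) := by
      rw [PT.follow_append, hfn']
      show PT.follow S (PT.node a c) [l] = some (c l)
      rw [show PT.follow S (PT.node a c) [l] = if l ∈ allowed S true a then PT.follow S (c l) [] else none from rfl, if_pos hlall, PT.follow_nil]
    have hmem2 : p ++ [l] ∈ PT.paths S t := (append_mem_paths S t).2 ⟨hp, hl⟩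
    have hrec := ih (p ++ [l]) (c l) tn hmem2 hfollow2 (h3 ▸ hchain')
    have : PT.hgt S (c l) + 1 ≤ PT.hgt S (.node a c) := by
      rw [PT.hgt]
      exact Nat.add_le_add_right (Finset.le_sup (f := fun l => PT.hgt S (c l)) hlall) 1
    calc (e :: rest).length = rest.length + 1 := by simp
      _ ≤ PT.hgt S (c l) + 1 := Nat.add_le_add_right hrec 1
      _ ≤ _ := this

theorem compile_good (hw : PT.WFt S t) (hok : PT.Ok S t ∅) :
    TreeSolvesESR S (compile S t) ∧ (compile S t).depth ≤ PT.hgt S t := by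
  have hfnil : PT.follow S t [] = some t := PT.follow_nil S t
  constructor
  · refine ⟨isDG_compile S t hw, isTree_compile S t, ?_⟩
    intro pl tn hcp hcons
    obtain ⟨hchain, hterm, htn⟩ := hcp
    have hroot : (compile S t).root = idx S t [] := rfl
    rw [hroot] at hchain
    have := chain_ok S t pl [] t ∅ tn (PT.nil_mem_paths S t) hfnil hok hchain hterm
    rw [Finset.empty_union] at this
    exact this hcons
  · apply csSup_le'
    rintro m ⟨pl, tn, ⟨hchain, -, -⟩, rfl⟩
    have hroot : (compile S t).root = idx S t [] := rfl
    rw [hroot] at hchain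
    exact chain_len S t pl [] t tn (PT.nil_mem_paths S t) hfnil hchain

end Compile

/-! ### Part 4: the strategy constructing a tree of depth ≤ d(S')·β⁺ -/

section Strategy

variable (S : Finset Rule)

/-- The rules of `S` all of whose equations are contained in `α`. -/
def Zf (α : Finset (ℕ × Option ℕ)) : Finset Rule := S.filter fun r => liftK r.K ⊆ α

/-- Stopping condition. -/
def stopP (α : Finset (ℕ × Option ℕ)) : Prop :=
  restrict (R_SR S) α = ∅ ∨ ∃ r ∈ restrict (R_SR S) α, r.len = 0

/-- A minimum node cover of the hypergraph of the longest rules of `(R_SR S)_α`. -/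
def coverOf (α : Finset (ℕ × Option ℕ)) : Finset ℕ :=
  (exists_beta_cover (Splus (restrict (R_SR S) α))).choose

lemma coverOf_spec (α : Finset (ℕ × Option ℕ)) :
    IsNodeCover (Splus (restrict (R_SR S) α)) (coverOf S α) ∧
      (coverOf S α).card = beta (Splus (restrict (R_SR S) α)) :=
  (exists_beta_cover (Splus (restrict (R_SR S) α))).choose_spec

/-- Ask the attributes of a list one after the other, then continue with `g`. -/
def phaseL (g : Finset (ℕ × Option ℕ) → PT) : List ℕ → Finset (ℕ × Option ℕ) → PT
  | [], α => g α
  | a :: L, α => .node a fun l => phaseL g L (insert (a, l) α)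

/-- The full strategy with a given amount of fuel. -/
def phaseF : ℕ → Finset (ℕ × Option ℕ) → PT
  | 0, α => .leaf (Zf S α)
  | f + 1, α =>
      if stopP S α then .leaf (Zf S α)
      else phaseL (phaseF f) (coverOf S α).toList α

/-- Invariant at the beginning of a phase. -/
def InvF (f : ℕ) (α : Finset (ℕ × Option ℕ)) : Prop :=
  ∀ r ∈ R_SR S, ConsistentE (liftK r.K ∪ α) → 0 < (r.restrict α).len →
    (r.restrict α).len ≤ f

/-- Invariant in the middle of a phase. -/
def InvL (f : ℕ) (L : List ℕ) (α : Finset (ℕ × Option ℕ)) : Prop :=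
  ∀ r ∈ R_SR S, ConsistentE (liftK r.K ∪ α) → 0 < (r.restrict α).len →
    (r.restrict α).len ≤ f + 1 ∧
      ((r.restrict α).len = f + 1 → ∃ b ∈ L, b ∈ (r.restrict α).attrs)

lemma InvL_nil_invF {f : ℕ} {α : Finset (ℕ × Option ℕ)} (h : InvL S f [] α) :
    InvF S f α := by
  intro r hr hc hpos
  obtain ⟨hle, heq⟩ := h r hr hc hpos
  rcases Nat.lt_or_ge (r.restrict α).len (f + 1) with hlt | hge
  · omega
  · rcases heq (le_antisymm hle hge) with ⟨b, hb, -⟩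
    simp at hb

lemma InvL_step {f : ℕ} {a : ℕ} {L : List ℕ} {α : Finset (ℕ × Option ℕ)} {l : Option ℕ}
    (h : InvL S f (a :: L) α) : InvL S f L (insert (a, l) α) := by
  intro r hr hcons hpos
  have hins : α ⊆ insert (a, l) α := Finset.subset_insert _ _
  have hcons₁ : ConsistentE (liftK r.K ∪ α) :=
    consistentE_mono (Finset.union_subset_union_right hins) hcons
  have hK2 : (r.restrict (insert (a, l) α)).K ⊆ (r.restrict α).K := restrict_anti hins
  have hcard : (r.restrict (insert (a, l) α)).len ≤ (r.restrict α).len :=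
    Finset.card_le_card hK2
  have hpos₁ : 0 < (r.restrict α).len := lt_of_lt_of_le hpos hcard
  obtain ⟨hle, heq⟩ := h r hr hcons₁ hpos₁
  refine ⟨le_trans hcard hle, fun hEq => ?_⟩
  have hlen1 : (r.restrict α).len = f + 1 := le_antisymm hle (hEq ▸ hcard)
  have hKeq : (r.restrict (insert (a, l) α)).K = (r.restrict α).K :=
    Finset.eq_of_subset_of_card_le hK2 (by
      show (r.restrict α).len ≤ (r.restrict (insert (a, l) α)).len
      omega)
  obtain ⟨b, hbL, hbattrs⟩ := heq hlen1
  have hb2 : b ∈ (r.restrict (insert (a, l) α)).attrs := by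
    rw [Rule.attrs, hKeq]; exact hbattrs
  rcases List.mem_cons.1 hbL with rfl | hbL'
  · exfalso
    rcases mem_rule_attrs.1 hb2 with ⟨δ, hδ⟩
    rcases mem_restrictK.1 hδ with ⟨hδK, hδα⟩
    have h1 : (b, some δ) ∈ liftK r.K ∪ insert (b, l) α :=
      Finset.mem_union_left _ (mem_liftK.2 ⟨δ, hδK, rfl⟩)
    have h2 : ((b : ℕ), l) ∈ liftK r.K ∪ insert (b, l) α :=
      Finset.mem_union_right _ (Finset.mem_insert_self _ _)
    have hlδ : some δ = l := hcons _ h1 _ h2 rfl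
    apply hδα
    rw [← hlδ]
    exact Finset.mem_insert_self _ _
  · exact ⟨b, hbL', hb2⟩

lemma zf_subset (α : Finset (ℕ × Option ℕ)) : Zf S α ⊆ S := Finset.filter_subset _ _

lemma leafOk {α : Finset (ℕ × Option ℕ)}
    (hcase : (∃ r ∈ R_SR S, ConsistentE (liftK r.K ∪ α) ∧ (r.restrict α).len = 0) ∨
      (∀ r ∈ R_SR S, ¬ ConsistentE (liftK r.K ∪ α))) :
    PT.Ok S (.leaf (Zf S α)) α := by
  intro _
  constructor
  · intro r hr
    exact (Finset.mem_filter.1 hr).2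
  · intro hZ r hrS
    rcases hcase with ⟨r₀, hr₀, hc₀, hlen₀⟩ | hall
    · exfalso
      have hsub : liftK r₀.K ⊆ α := by
        intro x hx
        rcases mem_liftK.1 hx with ⟨δ, hδ, hx2⟩
        by_contra hxα
        have : (x.1, δ) ∈ (r₀.restrict α).K := mem_restrictK.2 ⟨hδ, by rwa [← hx2, Prod.mk.eta]⟩
        rw [Rule.len, Finset.card_eq_zero] at hlen₀
        rw [hlen₀] at this
        simp at this
      have : r₀ ∈ Zf S α := Finset.mem_filter.2 ⟨RSR_subset S hr₀, hsub⟩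
      rw [hZ] at this
      simp at this
    · rcases exists_RSR_le hrS with ⟨r', hr', hsub⟩
      intro hcon
      exact hall r' hr' (consistentE_mono
        (Finset.union_subset_union_left (liftK_mono hsub)) hcon)

lemma okL (hwf : ∀ r ∈ S, r.WF) {f : ℕ} {g : Finset (ℕ × Option ℕ) → PT}
    (hg : ∀ β, InvF S f β → PT.Ok S (g β) β) :
    ∀ (L : List ℕ) (α : Finset (ℕ × Option ℕ)), InvL S f L α →
      PT.Ok S (phaseL g L α) α := by
  intro L
  induction L with
  | nil => intro α h; exact hg α (InvL_nil_invF S h)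
  | cons a L ih =>
    intro α h
    rw [phaseL]
    intro l _
    exact ih _ (InvL_step S h)

lemma invF_to_invL (hwf : ∀ r ∈ S, r.WF) {f : ℕ} {α : Finset (ℕ × Option ℕ)}
    (h : InvF S (f + 1) α) (hstop : ¬ stopP S α) :
    InvL S f (coverOf S α).toList α := by
  have hno0 : ¬ ∃ r ∈ restrict (R_SR S) α, r.len = 0 := fun hc => hstop (Or.inr hc)
  intro r hr hc hpos
  have hle : (r.restrict α).len ≤ f + 1 := h r hr hc hpos
  refine ⟨hle, fun hEq => ?_⟩
  -- show that r.restrict α is of maximal length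
  have hmem : r.restrict α ∈ restrict (R_SR S) α := restrict_mem hr hc
  have hdle : dPar (restrict (R_SR S) α) ≤ f + 1 := by
    apply Finset.sup_le
    intro r₀ hr₀
    rcases mem_restrict.1 hr₀ with ⟨r₁, hr₁, hc₁, rfl⟩
    rcases Nat.eq_zero_or_pos (r₁.restrict α).len with h0 | hp
    · omega
    · exact h r₁ hr₁ hc₁ hp
  have hdge : f + 1 ≤ dPar (restrict (R_SR S) α) := hEq ▸ Finset.le_sup hmem
  have hplus : r.restrict α ∈ Splus (restrict (R_SR S) α) :=
    Finset.mem_filter.2 ⟨hmem, by omega⟩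
  obtain ⟨hcov, -⟩ := coverOf_spec S α
  have hne : (r.restrict α).attrs.Nonempty := attrs_nonempty_of_len_pos (by omega)
  obtain ⟨b, hb⟩ := hcov.2 _ hplus hne
  rcases Finset.mem_inter.1 hb with ⟨hb1, hb2⟩
  exact ⟨b, Finset.mem_toList.2 hb2, hb1⟩

lemma okF (hwf : ∀ r ∈ S, r.WF) :
    ∀ (f : ℕ) (α : Finset (ℕ × Option ℕ)), InvF S f α → PT.Ok S (phaseF S f α) α := by
  intro f
  induction f with
  | zero =>
    intro α h
    rw [phaseF]
    apply leafOk
    by_cases hc : ∃ r ∈ R_SR S, ConsistentE (liftK r.K ∪ α)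
    · rcases hc with ⟨r, hr, hcr⟩
      refine Or.inl ⟨r, hr, hcr, ?_⟩
      by_contra h0
      have := h r hr hcr (Nat.pos_of_ne_zero h0)
      omega
    · push_neg at hc
      exact Or.inr hc
  | succ f ih =>
    intro α h
    rw [phaseF]
    split
    · next hstop =>
      apply leafOk
      rcases hstop with hempty | ⟨r₀, hr₀, hlen₀⟩
      · refine Or.inr fun r hr hc => ?_
        have : r.restrict α ∈ restrict (R_SR S) α := restrict_mem hr hc
        rw [hempty] at this
        simp at this
      · rcases mem_restrict.1 hr₀ with ⟨r, hr, hc, rfl⟩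
        exact Or.inl ⟨r, hr, hc, hlen₀⟩
    · next hstop =>
      exact okL S hwf (fun β hβ => ih β hβ) _ α (invF_to_invL S hwf h hstop)

lemma wftL {g : Finset (ℕ × Option ℕ) → PT} (hg : ∀ β, PT.WFt S (g β)) :
    ∀ (L : List ℕ), (∀ a ∈ L, a ∈ attrs S) → ∀ α, PT.WFt S (phaseL g L α) := by
  intro L
  induction L with
  | nil => intro _ α; exact hg α
  | cons a L ih =>
    intro hL α
    rw [phaseL]
    exact ⟨hL a (by simp), fun l => ih (fun b hb => hL b (by simp [hb])) _⟩

lemma coverOf_attrs {α : Finset (ℕ × Option ℕ)} {a : ℕ} (h : a ∈ coverOf S α) :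
    a ∈ attrs S := by
  obtain ⟨hcov, -⟩ := coverOf_spec S α
  have := hcov.1 h
  exact attrs_mono (RSR_subset S)
    (le_trans (attrs_mono (Splus_subset _)) (attrs_restrict_subset _ _) this)

lemma wftF : ∀ (f : ℕ) (α : Finset (ℕ × Option ℕ)), PT.WFt S (phaseF S f α) := by
  intro f
  induction f with
  | zero => intro α; rw [phaseF]; exact zf_subset S α
  | succ f ih =>
    intro α
    rw [phaseF]
    split
    · exact zf_subset S α
    · exact wftL S ih _ (fun a ha => coverOf_attrs S (α := α) (Finset.mem_toList.1 ha)) α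

lemma hgtL {g : Finset (ℕ × Option ℕ) → PT} {H : ℕ} (hg : ∀ β, PT.hgt S (g β) ≤ H) :
    ∀ (L : List ℕ) (α : Finset (ℕ × Option ℕ)),
      PT.hgt S (phaseL g L α) ≤ L.length + H := by
  intro L
  induction L with
  | nil => intro α; simpa [phaseL] using hg α
  | cons a L ih =>
    intro α
    rw [phaseL, PT.hgt]
    have : ((allowed S true a).sup fun l => PT.hgt S (phaseL g L (insert (a, l) α))) ≤
        L.length + H := Finset.sup_le fun l _ => ih _
    simp only [List.length_cons]
    omega

lemma coverOf_card_le (hwf : ∀ r ∈ S, r.WF) {α : Finset (ℕ × Option ℕ)}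
    (hstop : ¬ stopP S α) : (coverOf S α).card ≤ beta_ESRplus (R_SR S) := by
  obtain ⟨-, hcard⟩ := coverOf_spec S α
  have hne : (restrict (R_SR S) α).Nonempty := by
    rcases Finset.eq_empty_or_nonempty (restrict (R_SR S) α) with h | h
    · exact absurd (Or.inl h) hstop
    · exact h
  have hαcons : ConsistentE α := by
    rcases hne with ⟨r₀, hr₀⟩
    rcases mem_restrict.1 hr₀ with ⟨r, -, hc, -⟩
    exact consistentE_mono Finset.subset_union_right hc
  have hno0 : ¬ ∃ r ∈ restrict (R_SR S) α, r.len = 0 := fun hc => hstop (Or.inr hc)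
  have hT : ∀ r ∈ R_SR S, ConsistentE (liftK r.K) := fun r hr =>
    consistentE_liftK (hwf r (RSR_subset S hr))
  rw [hcard]
  exact betaPlus_restrict_le hT hαcons hno0

lemma hgtF (hwf : ∀ r ∈ S, r.WF) :
    ∀ (f : ℕ) (α : Finset (ℕ × Option ℕ)),
      PT.hgt S (phaseF S f α) ≤ f * beta_ESRplus (R_SR S) := by
  intro f
  induction f with
  | zero => intro α; rw [phaseF, PT.hgt]; exact Nat.zero_le _
  | succ f ih =>
    intro α
    rw [phaseF]
    split
    · rw [PT.hgt]; exact Nat.zero_le _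
    · next hstop =>
      have h1 := hgtL S (H := f * beta_ESRplus (R_SR S)) (fun β => ih β)
        (coverOf S α).toList α
      have h2 : (coverOf S α).toList.length ≤ beta_ESRplus (R_SR S) := by
        rw [Finset.length_toList]
        exact coverOf_card_le S hwf hstop
      calc PT.hgt S (phaseL (phaseF S f) (coverOf S α).toList α) ≤
            (coverOf S α).toList.length + f * beta_ESRplus (R_SR S) := h1
        _ ≤ beta_ESRplus (R_SR S) + f * beta_ESRplus (R_SR S) := by omega
        _ = (f + 1) * beta_ESRplus (R_SR S) := by ring

/-- The constructed tree establishing the upper bound. -/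
theorem upper_bound_tree (hwf : ∀ r ∈ S, r.WF) :
    ∃ G : DGraph, TreeSolvesESR S G ∧ G.depth ≤ dPar (R_SR S) * beta_ESRplus (R_SR S) := by
  set t := phaseF S (dPar (R_SR S)) ∅ with ht
  have hInv : InvF S (dPar (R_SR S)) ∅ := by
    intro r hr _ _
    have : (r.restrict ∅).len = r.len := by
      rw [Rule.len, Rule.len, restrict_empty]
    rw [this]
    exact Finset.le_sup hr
  have hok : PT.Ok S t ∅ := okF S hwf _ ∅ hInv
  have hwt : PT.WFt S t := wftF S _ ∅
  obtain ⟨hsolve, hdepth⟩ := compile_good S t hwt hok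
  exact ⟨compile S t, hsolve, le_trans hdepth (hgtF S hwf _ ∅)⟩

end Strategy

/-! ### Part 5: walking a solving tree according to an answer function -/

section Walk

variable (G : DGraph)

def reachS (v : ℕ) : Finset ℕ :=
  (Finset.range G.n).filter fun w => Relation.TransGen G.step v w

lemma reach_subset {u w : ℕ} (hstep : G.step u w) : reachS G w ⊆ reachS G u := by
  intro x hx
  rcases Finset.mem_filter.1 hx with ⟨hx1, hx2⟩
  exact Finset.mem_filter.2 ⟨hx1, Relation.TransGen.head hstep hx2⟩

lemma reach_lt (hval : ∀ e ∈ G.edges, e.1 < G.n ∧ e.2.2 < G.n) (hac : G.Acyclic)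
    {u : ℕ} {l : Option ℕ} {w : ℕ} (he : (u, l, w) ∈ G.edges) :
    (reachS G w).card < (reachS G u).card := by
  apply Finset.card_lt_card
  refine ⟨reach_subset G ⟨l, he⟩, fun hsub => ?_⟩
  have hwmem : w ∈ reachS G u := Finset.mem_filter.2
    ⟨Finset.mem_range.2 (hval _ he).2, Relation.TransGen.single ⟨l, he⟩⟩
  exact hac w (Finset.mem_filter.1 (hsub hwmem)).2

lemma chain_length_le (hval : ∀ e ∈ G.edges, e.1 < G.n ∧ e.2.2 < G.n) (hac : G.Acyclic) :
    ∀ (pl : List (ℕ × Option ℕ)) (v tn : ℕ), G.chainFrom v pl tn →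
      pl.length ≤ (reachS G v).card := by
  intro pl
  induction pl with
  | nil => intro v tn _; simp
  | cons e rest ih =>
    intro v tn hchain
    obtain ⟨-, w, hw, hchain'⟩ := hchain
    have h1 := ih w tn hchain'
    have h2 := reach_lt G hval hac hw
    simp only [List.length_cons]
    omega

lemma length_le_depth (hval : ∀ e ∈ G.edges, e.1 < G.n ∧ e.2.2 < G.n) (hac : G.Acyclic)
    {pl : List (ℕ × Option ℕ)} {tn : ℕ} (h : G.IsCompletePath pl tn) :
    pl.length ≤ G.depth := by
  apply le_csSup
  · refine ⟨(reachS G G.root).card, ?_⟩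
    rintro m ⟨p, t', ⟨hc, -, -⟩, rfl⟩
    exact chain_length_le G hval hac p G.root t' hc
  · exact ⟨pl, tn, h, rfl⟩

lemma walk {S : Finset Rule} (hDG : G.IsDG S true) (f : ℕ → Option ℕ)
    (hf : ∀ a ∈ attrs S, f a ∈ allowed S true a) :
    ∀ (N v : ℕ), (reachS G v).card < N → v < G.n →
      ∃ pl tn, G.chainFrom v pl tn ∧ G.IsTerminal tn ∧ tn < G.n ∧
        ∀ e ∈ pl, ∃ a, G.label e.1 = .inl a ∧ a ∈ attrs S ∧ e.2 = f a := by
  intro N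
  induction N with
  | zero => intro v h; omega
  | succ N ih =>
    intro v hcard hv
    by_cases hterm : G.IsTerminal v
    · exact ⟨[], v, rfl, hterm, hv, by simp⟩
    · have hcond := hDG.2.2.2 v hv
      rw [if_neg hterm] at hcond
      rcases hcond with ⟨a, hlab, ha, hiff, -⟩
      rcases (hiff (f a)).2 (hf a ha) with ⟨w, hw⟩
      have hwlt : w < G.n := (hDG.2.1 _ hw).2
      have hwcard : (reachS G w).card < N := by
        have := reach_lt G hDG.2.1 hDG.2.2.1 hw
        omega
      rcases ih w hwcard hwlt with ⟨pl, tn, hchain, hterm', htn, hprop⟩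
      refine ⟨(v, f a) :: pl, tn, ⟨rfl, w, hw, hchain⟩, hterm', htn, ?_⟩
      intro e he
      rcases List.mem_cons.1 he with rfl | he'
      · exact ⟨a, hlab, ha, rfl⟩
      · exact hprop e he'

lemma exists_walk {S : Finset Rule} (hDG : G.IsDG S true) (f : ℕ → Option ℕ)
    (hf : ∀ a ∈ attrs S, f a ∈ allowed S true a) :
    ∃ pl tn, G.IsCompletePath pl tn ∧
      ∀ e ∈ pl, ∃ a, G.label e.1 = .inl a ∧ a ∈ attrs S ∧ e.2 = f a := by
  rcases walk G hDG f hf ((reachS G G.root).card + 1) G.root (by omega) hDG.1 with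
    ⟨pl, tn, hchain, hterm, htn, hprop⟩
  exact ⟨pl, tn, ⟨hchain, hterm, htn⟩, hprop⟩

lemma pathEqs_mem {pl : List (ℕ × Option ℕ)} {x : ℕ × Option ℕ}
    (hx : x ∈ G.pathEqs pl) :
    ∃ e ∈ pl, Sum.elim (fun a => some ((a : ℕ), e.2)) (fun _ => none) (G.label e.1) = some x := by
  rw [DGraph.pathEqs, List.mem_toFinset, List.mem_filterMap] at hx
  exact hx

lemma pathEqs_fn {pl : List (ℕ × Option ℕ)} {f : ℕ → Option ℕ}
    (hprop : ∀ e ∈ pl, ∃ a, G.label e.1 = .inl a ∧ e.2 = f a) :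
    ∀ x ∈ G.pathEqs pl, x.2 = f x.1 := by
  intro x hx
  rcases pathEqs_mem G hx with ⟨e, he, hee⟩
  rcases hprop e he with ⟨a, hlab, hfa⟩
  rw [hlab] at hee
  simp only [Sum.elim_inl, Option.some.injEq] at hee
  rw [← hee, hfa]

lemma pathEqs_consistent {pl : List (ℕ × Option ℕ)} {f : ℕ → Option ℕ}
    (hprop : ∀ x ∈ G.pathEqs pl, x.2 = f x.1) : ConsistentE (G.pathEqs pl) := by
  intro p hp q hq hpq
  rw [hprop p hp, hprop q hq, hpq]

lemma pathEqs_card_le (pl : List (ℕ × Option ℕ)) : (G.pathEqs pl).card ≤ pl.length := by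
  rw [DGraph.pathEqs]
  refine le_trans (List.toFinset_card_le _) ?_
  exact List.length_filterMap_le _ _

lemma termSet_subset {S : Finset Rule} {ext : Bool} (hDG : G.IsDG S ext) {tn : ℕ}
    (hterm : G.IsTerminal tn) (htn : tn < G.n) : G.termSet tn ⊆ S := by
  have hcond := hDG.2.2.2 tn htn
  rw [if_pos hterm] at hcond
  rcases hcond with ⟨Z, hZ, hZS⟩
  rw [DGraph.termSet, hZ]
  simpa using hZS

end Walk

/-! ### Part 6: the main theorem -/

section Main

variable {S : Finset Rule}

lemma lower_dPar (hwf : ∀ r ∈ S, r.WF) {G : DGraph} (hsol : TreeSolvesESR S G) :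
    dPar (R_SR S) ≤ G.depth := by
  obtain ⟨hDG, -, hsolve⟩ := hsol
  rcases Nat.eq_zero_or_pos (dPar (R_SR S)) with h0 | hpos
  · omega
  have hne : (R_SR S).Nonempty := by
    by_contra hne
    rw [Finset.not_nonempty_iff_eq_empty] at hne
    rw [dPar, hne] at hpos
    simp at hpos
  obtain ⟨r, hr, hsup⟩ := Finset.exists_mem_eq_sup _ hne Rule.len
  have hrS : r ∈ S := RSR_subset S hr
  -- answer function following r
  set f : ℕ → Option ℕ := fun a => if h : ∃ δ, (a, δ) ∈ r.K then some h.choose else none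
    with hfdef
  have hfeq : ∀ a, f a = if h : ∃ δ, (a, δ) ∈ r.K then some h.choose else none :=
    fun a => rfl
  have hf1 : ∀ a δ, (a, δ) ∈ r.K → f a = some δ := by
    intro a δ hδ
    have hex : ∃ δ', (a, δ') ∈ r.K := ⟨δ, hδ⟩
    rw [hfeq a, dif_pos hex]
    have := hwf r hrS _ hex.choose_spec _ hδ rfl
    rw [Prod.ext_iff] at this
    have h22 : hex.choose = δ := this.2
    rw [h22]
  have hf2 : ∀ a δ, f a = some δ → (a, δ) ∈ r.K := by
    intro a δ h
    rw [hfeq a] at h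
    split at h
    · next hex =>
      obtain h' : hex.choose = δ := by injection h
      rw [← h']
      exact hex.choose_spec
    · exact absurd h (by simp)
  have hf : ∀ a ∈ attrs S, f a ∈ allowed S true a := by
    intro a _
    rw [hfeq a]
    split
    · next hex => exact some_mem_allowed (mem_VS.2 ⟨r, hrS, hex.choose_spec⟩) true
    · exact none_mem_allowed S a
  obtain ⟨pl, tn, hcp, hprop⟩ := exists_walk G hDG f hf
  have hchar : ∀ x ∈ G.pathEqs pl, x.2 = f x.1 :=
    pathEqs_fn G (fun e he => by rcases hprop e he with ⟨a, h1, -, h3⟩; exact ⟨a, h1, h3⟩)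
  have hcons : ConsistentE (G.pathEqs pl) := pathEqs_consistent G hchar
  obtain ⟨h1, h2⟩ := hsolve pl tn hcp hcons
  have hterm_ne : G.termSet tn ≠ ∅ := by
    intro h0'
    apply h2 h0' r hrS
    rw [consistentE_union_iff]
    refine ⟨consistentE_liftK (hwf r hrS), hcons, ?_⟩
    intro p hp q hq hpq
    rcases mem_liftK.1 hp with ⟨δ, hδ, hp2⟩
    rw [hchar q hq, ← hpq, hp2, hf1 _ _ hδ]
  obtain ⟨r'', hr''⟩ := Finset.nonempty_iff_ne_empty.2 hterm_ne
  have hr''S : r'' ∈ S := termSet_subset G hDG hcp.2.1 hcp.2.2 hr''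
  have hsub : r''.K ⊆ r.K := by
    intro p hp
    have hlift : (p.1, some p.2) ∈ G.pathEqs pl := h1 r'' hr'' (mem_liftK.2 ⟨p.2, by
      rw [Prod.mk.eta]; exact hp, rfl⟩)
    have := hchar _ hlift
    have hfa : f p.1 = some p.2 := this.symm
    have := hf2 _ _ hfa
    rwa [Prod.mk.eta] at this
  have hKeq : r''.K = r.K := by
    by_contra hne'
    have hss : r''.K ⊂ r.K := ssubset_of_subset_of_ne hsub hne'
    have := (Finset.mem_filter.1 hr).2
    exact this ⟨r'', hr''S, hss⟩
  have hsubeq : liftK r.K ⊆ G.pathEqs pl := by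
    rw [← hKeq]
    exact h1 r'' hr''
  have hdd : dPar (R_SR S) = r.K.card := hsup
  calc dPar (R_SR S) = r.K.card := hdd
    _ = (liftK r.K).card := (liftK_card _).symm
    _ ≤ (G.pathEqs pl).card := Finset.card_le_card hsubeq
    _ ≤ pl.length := pathEqs_card_le G pl
    _ ≤ G.depth := length_le_depth G hDG.2.1 hDG.2.2.1 hcp

lemma lower_beta (hwf : ∀ r ∈ S, r.WF) {G : DGraph} (hsol : TreeSolvesESR S G) :
    beta_ESR (R_SR S) ≤ G.depth := by
  obtain ⟨hDG, -, hsolve⟩ := hsol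
  show sSup {b | ∃ α ∈ ESys (R_SR S) true, beta (I_SR (restrict (R_SR S) α)) = b} ≤ G.depth
  apply csSup_le'
  rintro b ⟨α, hαE, rfl⟩
  set X := restrict (R_SR S) α with hX
  by_cases h0 : ∃ r ∈ X, r.len = 0
  · rw [I_SR, if_pos h0]
    have : beta (X.filter fun r => r.len = 0) = 0 :=
      beta_eq_zero_of_all_len_zero fun r hr => (Finset.mem_filter.1 hr).2
    rw [this]
    omega
  · rw [I_SR, if_neg h0]
    set f : ℕ → Option ℕ := fun a => if h : ∃ v, (a, v) ∈ α then h.choose else none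
      with hfdef
    have hfeq : ∀ a, f a = if h : ∃ v, (a, v) ∈ α then h.choose else none := fun a => rfl
    have hf1 : ∀ a v, (a, v) ∈ α → f a = v := by
      intro a v hv
      have hex : ∃ v', (a, v') ∈ α := ⟨v, hv⟩
      rw [hfeq a, dif_pos hex]
      exact hαE.1 _ hex.choose_spec _ hv rfl
    have hf2 : ∀ a v, f a = some v → (a, some v) ∈ α := by
      intro a v h
      rw [hfeq a] at h
      split at h
      · next hex =>
        rw [← h]
        exact hex.choose_spec
      · exact absurd h (by simp)
    have hf : ∀ a ∈ attrs S, f a ∈ allowed S true a := by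
      intro a _
      rw [hfeq a]
      split
      · next hex =>
        have h2' : hex.choose ∈ allowed (R_SR S) true a := (hαE.2 _ hex.choose_spec).2
        rcases mem_allowed_true.1 h2' with hnone | ⟨δ, hδ, hsome⟩
        · rw [hnone]; exact none_mem_allowed S a
        · rw [hsome]; exact some_mem_allowed (VS_mono (RSR_subset S) a hδ) true
      · exact none_mem_allowed S a
    obtain ⟨pl, tn, hcp, hprop⟩ := exists_walk G hDG f hf
    have hchar : ∀ x ∈ G.pathEqs pl, x.2 = f x.1 :=
      pathEqs_fn G (fun e he => by rcases hprop e he with ⟨a, hh1, -, hh3⟩; exact ⟨a, hh1, hh3⟩)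
    have hcons : ConsistentE (G.pathEqs pl) := pathEqs_consistent G hchar
    obtain ⟨h1, h2⟩ := hsolve pl tn hcp hcons
    -- the terminal set must be empty
    have hterm0 : G.termSet tn = ∅ := by
      by_contra hne'
      obtain ⟨r'', hr''⟩ := Finset.nonempty_iff_ne_empty.2 hne'
      have hr''S : r'' ∈ S := termSet_subset G hDG hcp.2.1 hcp.2.2 hr''
      have hsubα : liftK r''.K ⊆ α := by
        intro x hx
        rcases mem_liftK.1 hx with ⟨δ, hδ, hx2⟩
        have hlift : x ∈ G.pathEqs pl := h1 r'' hr'' hx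
        have hxf : x.2 = f x.1 := hchar _ hlift
        have : (x.1, some δ) ∈ α := hf2 x.1 δ (by rw [← hx2, ← hxf])
        rwa [← hx2, Prod.mk.eta] at this
      rcases exists_RSR_le hr''S with ⟨r''', hr''', hsub3⟩
      have hcons3 : ConsistentE (liftK r'''.K ∪ α) := by
        apply consistentE_mono _ hαE.1
        apply Finset.union_subset _ subset_rfl
        exact le_trans (liftK_mono hsub3) hsubα
      have hmem3 : r'''.restrict α ∈ X := restrict_mem hr''' hcons3
      apply h0
      refine ⟨r'''.restrict α, hmem3, ?_⟩
      rw [Rule.len, Finset.card_eq_zero, Finset.eq_empty_iff_forall_notMem]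
      intro p hp
      rcases mem_restrictK.1 hp with ⟨hpK, hpα⟩
      exact hpα (hsubα (liftK_mono hsub3 (mem_liftK.2 ⟨p.2, hpK, rfl⟩)))
    have hall : ∀ r ∈ S, ¬ ConsistentE (liftK r.K ∪ G.pathEqs pl) := h2 hterm0
    -- build the node cover
    set B := (((G.pathEqs pl).filter fun p => p.2 = none).image Prod.fst) ∩ attrs X with hB
    have hcover : IsNodeCover X B := by
      refine ⟨Finset.inter_subset_right, ?_⟩
      intro r₀ hr₀ _
      rcases mem_restrict.1 hr₀ with ⟨r, hrT, hcα, rfl⟩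
      have hrS : r ∈ S := RSR_subset S hrT
      rcases not_consistent_union (consistentE_liftK (hwf r hrS)) hcons (hall r hrS) with
        ⟨a, x, y, hx, hy, hxy⟩
      rcases mem_liftK.1 hx with ⟨δ, hδ, hx2⟩
      simp only at hx2 hδ
      have hyf : y = f a := hchar (a, y) hy
      have hnodom : ¬ ∃ v, ((a : ℕ), v) ∈ α := by
        rintro ⟨v, hv⟩
        have hfv : f a = v := hf1 a v hv
        have hcross : x = v := (consistentE_union_iff.1 hcα).2.2 (a, x) hx (a, v) hv rfl
        apply hxy
        rw [hyf, hfv, ← hcross]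
      have hfa : f a = none := by
        rw [hfeq a, dif_neg hnodom]
      have hxnone : x ≠ y := hxy
      have hδα : ((a : ℕ), some δ) ∉ α := fun hc => hnodom ⟨some δ, hc⟩
      have hmemr₀ : ((a : ℕ), δ) ∈ (r.restrict α).K := mem_restrictK.2 ⟨hδ, hδα⟩
      refine ⟨a, Finset.mem_inter.2 ⟨mem_rule_attrs.2 ⟨δ, hmemr₀⟩, ?_⟩⟩
      rw [hB]
      refine Finset.mem_inter.2 ⟨?_, mem_attrs.2 ⟨r.restrict α, hr₀, δ, hmemr₀⟩⟩
      apply Finset.mem_image.2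
      refine ⟨(a, y), Finset.mem_filter.2 ⟨hy, ?_⟩, rfl⟩
      rw [hyf, hfa]
    calc beta X ≤ B.card := beta_le_of_cover hcover
      _ ≤ (((G.pathEqs pl).filter fun p => p.2 = none).image Prod.fst).card :=
          Finset.card_le_card Finset.inter_subset_left
      _ ≤ ((G.pathEqs pl).filter fun p => p.2 = none).card := Finset.card_image_le
      _ ≤ (G.pathEqs pl).card := Finset.card_filter_le _ _
      _ ≤ pl.length := pathEqs_card_le G pl
      _ ≤ G.depth := length_le_depth G hDG.2.1 hDG.2.2.1 hcp

theorem main_statement (hS : S.Nonempty) (hwf : ∀ r ∈ S, r.WF) :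
    max (dPar (R_SR S)) (beta_ESR (R_SR S)) ≤ h_ESR S ∧
    h_ESR S ≤ dPar (R_SR S) * beta_ESRplus (R_SR S) := by
  obtain ⟨G₁, hsol₁, hdep₁⟩ := upper_bound_tree S hwf
  have hne : {m | ∃ G : DGraph, TreeSolvesESR S G ∧ G.depth = m}.Nonempty :=
    ⟨G₁.depth, G₁, hsol₁, rfl⟩
  obtain ⟨G₀, hsol₀, hd₀⟩ := Nat.sInf_mem hne
  have hESR : h_ESR S = G₀.depth := hd₀.symm
  refine ⟨?_, ?_⟩
  · rw [hESR]
    exact max_le (lower_dPar hwf hsol₀) (lower_beta hwf hsol₀)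
  · have h1 : h_ESR S ≤ G₁.depth := Nat.sInf_le ⟨G₁, hsol₁, rfl⟩
    exact le_trans h1 hdep₁

end Main

/-- Theorem 4(f): with S′ = R_SR(S),
max{d(S′), β_ESR(S′)} ≤ h_ESR(S) ≤ d(S′)·β_ESR⁺(S′). -/
theorem statement_19 (S : Finset Rule) (hS : S.Nonempty) (hwf : ∀ r ∈ S, r.WF)
    (hn : 0 < nPar S) :
    max (dPar (R_SR S)) (beta_ESR (R_SR S)) ≤ h_ESR S ∧
    h_ESR S ≤ dPar (R_SR S) * beta_ESRplus (R_SR S) := by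
  exact main_statement hS hwf

end DRS

end
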